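/- If Φ_t maps each point x_i to the vector (λ_1^t φ_1(x_i), …, λ_N^t φ_N(x_i)) where (λ_j, φ_j) are eigenpairs of a diagonalizable matrix P with an orthonormal eigenbasis in a weighted inner product, then the squared Euclidean distance ‖Φ_t(x) − Φ_t(y)‖² equals the diffusion distance ∑_z (P^t(x,z) − P^t(y,z))²/w(z). -/

import Mathlib

open Matrix

theorem stmt_15 {N : ℕ} (K : Matrix (Fin N) (Fin N) ℝ)
    (hsymm : ∀ x y, K x y = K y x) (hpos : ∀ x y, 0 < K x y)
    (d : Fin N → ℝ) (hd : ∀ x, d x = ∑ z, K x z)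
    (P : Matrix (Fin N) (Fin N) ℝ) (hP : ∀ x y, P x y = K x y / d x)
    (w : Fin N → ℝ) (hw : ∀ z, w z = d z / ∑ u, d u)
    (lam : Fin N → ℝ) (φ : Fin N → (Fin N → ℝ))
    (heig : ∀ j, P.mulVec (φ j) = lam j • φ j)
    (horth : ∀ j k, ∑ z, φ j z * φ k z * w z = if j = k then 1 else 0)
    (t : ℕ) (ht : 1 ≤ t)
    (Φ : Fin N → (Fin N → ℝ)) (hΦ : ∀ x j, Φ x j = lam j ^ t * φ j x)
    (x y : Fin N) :
    ∑ j, (Φ x j - Φ y j) ^ 2 = ∑ z, ((P ^ t) x z - (P ^ t) y z) ^ 2 / w z := by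
  -- positivity of d and w
  have hd0 : ∀ z, 0 < d z := fun z => by
    rw [hd]; exact Finset.sum_pos (fun u _ => hpos z u) ⟨x, Finset.mem_univ x⟩
  have hw0 : ∀ z, 0 < w z := fun z => by
    rw [hw]
    exact div_pos (hd0 z) (Finset.sum_pos (fun u _ => hd0 u) ⟨x, Finset.mem_univ x⟩)
  -- completeness of the eigenbasis
  set B : Matrix (Fin N) (Fin N) ℝ := fun j z => φ j z * Real.sqrt (w z) with hB
  have hBBt : B * Bᵀ = 1 := by
    ext j k
    simp only [mul_apply, transpose_apply, one_apply, hB]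
    calc ∑ z, (φ j z * Real.sqrt (w z)) * (φ k z * Real.sqrt (w z))
        = ∑ z, φ j z * φ k z * w z := by
          refine Finset.sum_congr rfl fun z _ => ?_
          rw [show (φ j z * Real.sqrt (w z)) * (φ k z * Real.sqrt (w z))
              = φ j z * φ k z * (Real.sqrt (w z) * Real.sqrt (w z)) from by ring,
            Real.mul_self_sqrt (hw0 z).le]
      _ = if j = k then 1 else 0 := horth j k
  have hBtB : Bᵀ * B = 1 := mul_eq_one_comm.mp hBBt
  have hcomp : ∀ u z, ∑ j, φ j u * φ j z * w z = if u = z then 1 else 0 := by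
    intro u z
    have h := congrFun (congrFun hBtB u) z
    simp only [mul_apply, transpose_apply] at h
    simp only [mul_apply, transpose_apply, one_apply, hB] at h
    by_cases huz : u = z
    · subst huz
      simp only [eq_self_iff_true, if_true] at h ⊢
      rw [← h]
      refine Finset.sum_congr rfl fun j _ => ?_
      rw [show φ j u * Real.sqrt (w u) * (φ j u * Real.sqrt (w u))
          = φ j u * φ j u * (Real.sqrt (w u) * Real.sqrt (w u)) from by ring,
        Real.mul_self_sqrt (hw0 u).le]
    · simp only [if_neg huz] at h ⊢
      have h2 : (∑ j, φ j u * φ j z) * (Real.sqrt (w u) * Real.sqrt (w z)) = 0 := by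
        rw [Finset.sum_mul, ← h]
        exact Finset.sum_congr rfl fun j _ => by ring
      have hne : Real.sqrt (w u) * Real.sqrt (w z) ≠ 0 :=
        (mul_pos (Real.sqrt_pos.mpr (hw0 u)) (Real.sqrt_pos.mpr (hw0 z))).ne'
      have h3 : ∑ j, φ j u * φ j z = 0 := by
        rcases mul_eq_zero.mp h2 with h4 | h4
        · exact h4
        · exact absurd h4 hne
      rw [show (∑ j, φ j u * φ j z * w z) = (∑ j, φ j u * φ j z) * w z from
        (Finset.sum_mul _ _ _).symm, h3, zero_mul]
  -- eigenpairs of powers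
  have heigt : ∀ (n : ℕ) j, (P ^ n).mulVec (φ j) = (lam j ^ n) • φ j := by
    intro n j
    induction n with
    | zero => simp
    | succ n ih =>
      rw [pow_succ, ← Matrix.mulVec_mulVec, heig j, Matrix.mulVec_smul, ih,
        smul_smul, mul_comm (lam j) (lam j ^ n), ← pow_succ]
  -- spectral decomposition of P ^ t
  have hspec : ∀ u z, (P ^ t) u z = ∑ j, lam j ^ t * φ j u * (φ j z * w z) := by
    intro u z
    have h1 : ∀ j, lam j ^ t * φ j u * (φ j z * w z)
        = ∑ v, (P ^ t) u v * φ j v * (φ j z * w z) := by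
      intro j
      have := congrFun (heigt t j) u
      simp only [Matrix.mulVec, dotProduct, Pi.smul_apply, smul_eq_mul] at this
      rw [← Finset.sum_mul, ← this]
    calc (P ^ t) u z = ∑ v, (P ^ t) u v * (if v = z then 1 else 0) := by
          simp
      _ = ∑ v, (P ^ t) u v * ∑ j, φ j v * φ j z * w z := by
          refine Finset.sum_congr rfl fun v _ => ?_; rw [hcomp v z]
      _ = ∑ v, ∑ j, (P ^ t) u v * φ j v * (φ j z * w z) := by
          refine Finset.sum_congr rfl fun v _ => ?_
          rw [Finset.mul_sum]
          exact Finset.sum_congr rfl fun j _ => by ring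
      _ = ∑ j, ∑ v, (P ^ t) u v * φ j v * (φ j z * w z) := Finset.sum_comm
      _ = ∑ j, lam j ^ t * φ j u * (φ j z * w z) := by
          exact Finset.sum_congr rfl fun j _ => (h1 j).symm
  -- main computation
  set c : Fin N → ℝ := fun j => lam j ^ t * (φ j x - φ j y) with hc
  have hdiff : ∀ z, (P ^ t) x z - (P ^ t) y z = (∑ j, c j * φ j z) * w z := by
    intro z
    rw [hspec x z, hspec y z, ← Finset.sum_sub_distrib, Finset.sum_mul]
    exact Finset.sum_congr rfl fun j _ => by simp only [hc]; ring
  calc ∑ j, (Φ x j - Φ y j) ^ 2 = ∑ j, c j ^ 2 := by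
        refine Finset.sum_congr rfl fun j _ => ?_
        rw [hΦ x j, hΦ y j]; simp only [hc]; ring
    _ = ∑ j, ∑ k, c j * c k * (if j = k then 1 else 0) := by
        refine Finset.sum_congr rfl fun j _ => ?_
        simp [sq]
    _ = ∑ j, ∑ k, c j * c k * ∑ z, φ j z * φ k z * w z := by
        refine Finset.sum_congr rfl fun j _ => Finset.sum_congr rfl fun k _ => ?_
        rw [horth j k]
    _ = ∑ j, ∑ k, ∑ z, (c j * φ j z) * (c k * φ k z) * w z := by
        refine Finset.sum_congr rfl fun j _ => Finset.sum_congr rfl fun k _ => ?_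
        rw [Finset.mul_sum]
        exact Finset.sum_congr rfl fun z _ => by ring
    _ = ∑ j, ∑ z, ∑ k, (c j * φ j z) * (c k * φ k z) * w z :=
        Finset.sum_congr rfl fun j _ => Finset.sum_comm
    _ = ∑ z, ∑ j, ∑ k, (c j * φ j z) * (c k * φ k z) * w z := Finset.sum_comm
    _ = ∑ z, (∑ j, c j * φ j z) ^ 2 * w z := by
        refine Finset.sum_congr rfl fun z _ => ?_
        rw [sq, Finset.sum_mul_sum]
        rw [Finset.sum_mul]
        refine Finset.sum_congr rfl fun j _ => ?_
        rw [Finset.sum_mul]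
    _ = ∑ z, ((P ^ t) x z - (P ^ t) y z) ^ 2 / w z := by
        refine Finset.sum_congr rfl fun z _ => ?_
        rw [hdiff z, mul_pow, mul_div_assoc, sq (w z), mul_div_assoc,
          div_self (hw0 z).ne', mul_one]
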